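/- Let M be an odd matching of a finite simple graph G with isolated vertex u, and let P be a path in G from u to a vertex v with vertex sequence u = v_0, v_1, …, v_{2k} = v (k ≥ 1) such that the edges v_{2i}v_{2i+1} are not in M and the edges v_{2i+1}v_{2i+2} are in M (so P is an M-alternating path of even length starting with a non-matching edge and ending with a matching edge). Then M △ E(P), the symmetric difference of M with the edge set of P, is an odd matching of G whose isolated vertex is v, and M can be reconfigured to M △ E(P) by a flip sequence of length exactly k. -/

import Mathlib

/-- A vertex `v` is covered by the matching `M` if some edge of `M` contains it. -/
def Covers {V : Type*} (M : Set (Sym2 V)) (v : V) : Prop := ∃ e ∈ M, v ∈ e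

/-- `M` is a matching of `G`: a set of edges of `G`, no two of which share a vertex. -/
def IsMatchingOn {V : Type*} (G : SimpleGraph V) (M : Set (Sym2 V)) : Prop :=
  M ⊆ G.edgeSet ∧ ∀ e ∈ M, ∀ f ∈ M, e ≠ f → ∀ v : V, v ∈ e → v ∉ f

/-- `M` is an odd matching of `G`: a matching such that exactly one vertex is uncovered. -/
def IsOddMatching {V : Type*} (G : SimpleGraph V) (M : Set (Sym2 V)) : Prop :=
  IsMatchingOn G M ∧ ∃! v : V, ¬ Covers M v

/-- A flip transforms the odd matching `M` with isolated vertex `u` into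
`M' = (M \ {vw}) ∪ {uv}`, where `uv` is an edge of `G` and `vw` is an edge of `M`. -/
def Flip {V : Type*} (G : SimpleGraph V) (M M' : Set (Sym2 V)) : Prop :=
  IsOddMatching G M ∧
  ∃ u v w : V, ¬ Covers M u ∧ s(u, v) ∈ G.edgeSet ∧ s(v, w) ∈ M ∧
    M' = (M \ {s(v, w)}) ∪ {s(u, v)}

/-- `M` can be reconfigured to `M'` by some finite sequence of flips. -/
def Reconfig {V : Type*} (G : SimpleGraph V) (M M' : Set (Sym2 V)) : Prop :=
  Relation.ReflTransGen (Flip G) M M'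

/-- `G` is reconfigurable: every odd matching can be reconfigured to every other one. -/
def Reconfigurable {V : Type*} (G : SimpleGraph V) : Prop :=
  ∀ M M' : Set (Sym2 V), IsOddMatching G M → IsOddMatching G M' → Reconfig G M M'

/-- `M` can be transformed into `M'` by a flip sequence of length exactly `k`. -/
def FlipSeq {V : Type*} (G : SimpleGraph V) (M M' : Set (Sym2 V)) (k : ℕ) : Prop :=
  ∃ f : ℕ → Set (Sym2 V), f 0 = M ∧ f k = M' ∧ ∀ i < k, Flip G (f i) (f (i + 1))

/-- The graph obtained from `G` by deleting the vertex set `s` has a perfect matching: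
a matching of `G` avoiding the vertices of `s` and covering all other vertices. -/
def HasPerfectMatchingAvoiding {V : Type*} (G : SimpleGraph V) (s : Set V) : Prop :=
  ∃ M : Set (Sym2 V), IsMatchingOn G M ∧ (∀ e ∈ M, ∀ v : V, v ∈ e → v ∉ s) ∧
    ∀ v : V, v ∉ s → Covers M v

lemma flip_result {V : Type*} (G : SimpleGraph V) (M : Set (Sym2 V))
    (hM : IsOddMatching G M) (u v w : V) (hu : ¬ Covers M u)
    (huv : s(u,v) ∈ G.edgeSet) (hvw : s(v,w) ∈ M) :
    IsOddMatching G ((M \ {s(v,w)}) ∪ {s(u,v)}) ∧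
    ¬ Covers ((M \ {s(v,w)}) ∪ {s(u,v)}) w := by
  obtain ⟨⟨hsub, hdisj⟩, z, hz, hzuniq⟩ := hM
  have hvwG : s(v,w) ∈ G.edgeSet := hsub hvw
  have hne_uv : u ≠ v := (G.mem_edgeSet.mp huv).ne
  have hne_vw : v ≠ w := (G.mem_edgeSet.mp hvwG).ne
  have hu_nvw : u ∉ s(v,w) := fun h => hu ⟨_, hvw, h⟩
  have hne_uw : u ≠ w := fun h => hu_nvw (by simp [h])
  have hw_unc : ¬ Covers ((M \ {s(v,w)}) ∪ {s(u,v)}) w := by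
    rintro ⟨e, he, hwe⟩
    rcases he with ⟨heM, hene⟩ | he
    · exact hdisj e heM s(v,w) hvw (by simpa using hene) w hwe (by simp)
    · simp only [Set.mem_singleton_iff] at he
      subst he
      rcases Sym2.mem_iff.mp hwe with h | h
      · exact hne_uw h.symm
      · exact hne_vw h.symm
  refine ⟨⟨⟨?_, ?_⟩, w, hw_unc, ?_⟩, hw_unc⟩
  · rintro e (⟨heM, _⟩ | he)
    · exact hsub heM
    · simp only [Set.mem_singleton_iff] at he; subst he; exact huv
  · rintro e (⟨heM, hene⟩ | he) g (⟨hgM, hgne⟩ | hg) hef x hxe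
    · exact hdisj e heM g hgM hef x hxe
    · simp only [Set.mem_singleton_iff] at hg; subst hg
      intro hxg
      rcases Sym2.mem_iff.mp hxg with h | h
      · exact hu ⟨e, heM, h ▸ hxe⟩
      · exact hdisj e heM s(v,w) hvw (by simpa using hene) x hxe (by simp [h])
    · simp only [Set.mem_singleton_iff] at he; subst he
      intro hxg
      rcases Sym2.mem_iff.mp hxe with h | h
      · exact hu ⟨g, hgM, h ▸ hxg⟩
      · exact hdisj g hgM s(v,w) hvw (by simpa using hgne) x hxg (by simp [h])
    · simp only [Set.mem_singleton_iff] at he hg; exact absurd (he.trans hg.symm) hef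
  · intro x hx
    have hxu : x ≠ u := fun h => hx ⟨s(u,v), Or.inr rfl, by simp [h]⟩
    have hxv : x ≠ v := fun h => hx ⟨s(u,v), Or.inr rfl, by simp [h]⟩
    by_cases hc : Covers M x
    · obtain ⟨e, heM, hxe⟩ := hc
      by_cases hevw : e = s(v,w)
      · subst hevw
        rcases Sym2.mem_iff.mp hxe with h | h
        · exact absurd h hxv
        · exact h
      · exact absurd ⟨e, Or.inl ⟨heM, by simpa using hevw⟩, hxe⟩ hx
    · have := hzuniq x hc
      have hzu := hzuniq u hu
      rw [this, hzu] at hxu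
      exact absurd rfl hxu

lemma main_aux {V : Type*} (G : SimpleGraph V) (M : Set (Sym2 V))
    (hM : IsOddMatching G M) (u : V) (hu : ¬ Covers M u) :
    ∀ (k : ℕ) (f : ℕ → V), f 0 = u →
    (∀ i ≤ 2 * k, ∀ j ≤ 2 * k, f i = f j → i = j) →
    (∀ i < 2 * k, G.Adj (f i) (f (i + 1))) →
    (∀ i < k, s(f (2 * i), f (2 * i + 1)) ∉ M) →
    (∀ i < k, s(f (2 * i + 1), f (2 * i + 2)) ∈ M) →
    IsOddMatching G (symmDiff M {e | ∃ i < 2 * k, e = s(f i, f (i + 1))}) ∧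
    ¬ Covers (symmDiff M {e | ∃ i < 2 * k, e = s(f i, f (i + 1))}) (f (2 * k)) ∧
    FlipSeq G M (symmDiff M {e | ∃ i < 2 * k, e = s(f i, f (i + 1))}) k := by
  intro k
  induction k with
  | zero =>
    intro f hstart _ _ _ _
    have hP : {e : Sym2 V | ∃ i < 2 * 0, e = s(f i, f (i + 1))} = ∅ := by
      ext e; simp
    rw [hP]
    have hD : symmDiff M (∅ : Set (Sym2 V)) = M := by
      simp [Set.symmDiff_def]
    rw [hD, hstart]
    exact ⟨hM, hu, fun _ => M, rfl, rfl, fun i hi => absurd hi (by omega)⟩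
  | succ k ih =>
    intro f hstart hinj hadj hnotM hinM
    obtain ⟨ihOdd, ihUnc, g, hg0, hgk, hgflip⟩ :=
      ih f hstart (fun i hi j hj => hinj i (by omega) j (by omega))
        (fun i hi => hadj i (by omega)) (fun i hi => hnotM i (by omega))
        (fun i hi => hinM i (by omega))
    set P : ℕ → Set (Sym2 V) := fun m => {e | ∃ i < 2 * m, e = s(f i, f (i + 1))} with hPdef
    set e1 : Sym2 V := s(f (2 * k), f (2 * k + 1)) with he1def
    set e2 : Sym2 V := s(f (2 * k + 1), f (2 * k + 2)) with he2def
    have he1M : e1 ∉ M := hnotM k (by omega)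
    have he2M : e2 ∈ M := hinM k (by omega)
    have he1P : e1 ∉ P k := by
      rintro ⟨i, hi, heq⟩
      rcases Sym2.eq_iff.mp heq with ⟨h1, h2⟩ | ⟨h1, h2⟩
      · have := hinj (2 * k) (by omega) i (by omega) h1; omega
      · have := hinj (2 * k) (by omega) (i + 1) (by omega) h1
        have := hinj (2 * k + 1) (by omega) i (by omega) h2; omega
    have he2P : e2 ∉ P k := by
      rintro ⟨i, hi, heq⟩
      rcases Sym2.eq_iff.mp heq with ⟨h1, h2⟩ | ⟨h1, h2⟩
      · have := hinj (2 * k + 1) (by omega) i (by omega) h1; omega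
      · have := hinj (2 * k + 1) (by omega) (i + 1) (by omega) h1
        have := hinj (2 * k + 2) (by omega) i (by omega) h2; omega
    have hPsucc : P (k + 1) = P k ∪ {e1, e2} := by
      ext e
      simp only [hPdef, Set.mem_setOf_eq, Set.mem_union, Set.mem_insert_iff,
        Set.mem_singleton_iff]
      constructor
      · rintro ⟨i, hi, rfl⟩
        rcases Nat.lt_or_ge i (2 * k) with h | h
        · exact Or.inl ⟨i, h, rfl⟩
        · rcases (by omega : i = 2 * k ∨ i = 2 * k + 1) with rfl | rfl
          · exact Or.inr (Or.inl rfl)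
          · exact Or.inr (Or.inr (by norm_num [he2def]))
      · rintro (⟨i, hi, rfl⟩ | rfl | rfl)
        · exact ⟨i, by omega, rfl⟩
        · exact ⟨2 * k, by omega, rfl⟩
        · exact ⟨2 * k + 1, by omega, by norm_num [he2def]⟩
    have he2D : e2 ∈ symmDiff M (P k) := Set.mem_symmDiff.mpr (Or.inl ⟨he2M, he2P⟩)
    have he1G : e1 ∈ G.edgeSet := G.mem_edgeSet.mpr (hadj (2 * k) (by omega))
    have hset : symmDiff M (P (k + 1)) = (symmDiff M (P k) \ {e2}) ∪ {e1} := by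
      ext e
      simp only [Set.mem_symmDiff, hPsucc, Set.mem_union, Set.mem_insert_iff,
        Set.mem_singleton_iff, Set.mem_diff]
      by_cases h1 : e = e1
      · subst h1; tauto
      · by_cases h2 : e = e2
        · subst h2; tauto
        · tauto
    have hflip := flip_result G (symmDiff M (P k)) ihOdd (f (2 * k)) (f (2 * k + 1))
      (f (2 * k + 2)) ihUnc he1G he2D
    rw [← he1def, ← he2def, ← hset] at hflip
    have h2k2 : 2 * (k + 1) = 2 * k + 2 := by ring
    refine ⟨hflip.1, by rw [h2k2]; exact hflip.2, ?_⟩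
    refine ⟨fun i => if i = k + 1 then symmDiff M (P (k + 1)) else g i, by simp [hg0], by simp [hPdef], ?_⟩
    intro i hi
    rcases Nat.lt_or_ge i k with h | h
    · simp only [if_neg (by omega : i ≠ k + 1), if_neg (by omega : i + 1 ≠ k + 1)]
      exact hgflip i h
    · have hik : k = i := by omega
      subst hik
      simp only [if_neg (by omega : k ≠ k + 1), if_pos rfl, hgk]
      exact ⟨ihOdd, f (2 * k), f (2 * k + 1), f (2 * k + 2), ihUnc, he1G, he2D, hset⟩

/-- Flipping an odd matching `M` (isolated vertex `u`) along an `M`-alternating path of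
even length `2k` from `u` to `v` (starting with a non-matching edge and ending with a
matching edge) yields the odd matching `M △ E(P)` with isolated vertex `v`, reachable
from `M` by a flip sequence of length exactly `k`. -/
theorem stmt7 {V : Type*} [Fintype V] (G : SimpleGraph V) (M : Set (Sym2 V))
    (hM : IsOddMatching G M) (u : V) (hu : ¬ Covers M u)
    (k : ℕ) (hk : 1 ≤ k) (f : ℕ → V)
    (hstart : f 0 = u)
    (hinj : ∀ i ≤ 2 * k, ∀ j ≤ 2 * k, f i = f j → i = j)
    (hadj : ∀ i < 2 * k, G.Adj (f i) (f (i + 1)))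
    (hnotM : ∀ i < k, s(f (2 * i), f (2 * i + 1)) ∉ M)
    (hinM : ∀ i < k, s(f (2 * i + 1), f (2 * i + 2)) ∈ M) :
    IsOddMatching G (symmDiff M {e | ∃ i < 2 * k, e = s(f i, f (i + 1))}) ∧
    ¬ Covers (symmDiff M {e | ∃ i < 2 * k, e = s(f i, f (i + 1))}) (f (2 * k)) ∧
    FlipSeq G M (symmDiff M {e | ∃ i < 2 * k, e = s(f i, f (i + 1))}) k := by
  exact main_aux G M hM u hu k f hstart hinj hadj hnotM hinM
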